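/- arXiv:2604.06879 — 7 statements merged into one kernel-verified Lean document; each statement's English description precedes it below -/
import Mathlib

section
/- Unique normal forms for coherent processes (Lemma 1): if P is a coherent process (modulo a congruence ≅) of single-clock CCSˡᵐ, and P ⇓ N1 and P ⇓ N2, then N1 ≅ N2. -/
namespace CCSlm

/-- Labels 𝓛 = R ∪ {σ}: channel names with polarity (rendezvous actions) plus the single clock σ. -/
inductive Label (Name : Type) : Type
  | pos : Name → Label Name
  | neg : Name → Label Name
  | clock : Label Name

/-- Complementation ℓ ↦ ℓ̄ (an involution, with σ̄ = σ). -/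
def Label.bar {Name : Type} : Label Name → Label Name
  | .pos a => .neg a
  | .neg a => .pos a
  | .clock => .clock

/-- Actions Act = 𝓛 ∪ {τ}. -/
inductive Act (Name : Type) : Type
  | lab : Label Name → Act Name
  | tau : Act Name

/-- The (at most one) label of an action, as a set. -/
def Act.labels {Name : Type} : Act Name → Set (Label Name)
  | .lab ℓ => {ℓ}
  | .tau => ∅

/-- α ∈ R (α is a rendezvous action). -/
def Act.isRendezvous {Name : Type} : Act Name → Prop
  | .lab .clock => False
  | .tau => False
  | .lab _ => True

/-- α ∈ R ∪ {τ}. -/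
def Act.isRendezvousOrTau {Name : Type} : Act Name → Prop
  | .lab .clock => False
  | _ => True

/-- Clock horizons H = {⊥,⊤}, as `Bool` (`false` = ⊥ = ∅, `true` = ⊤ = {σ}), ordered by `≤`. -/
abbrev Horizon : Type := Bool

/-- Blocking relations B ⊆ H × 2^𝓛. -/
abbrev Blocking (Name : Type) : Type := Set (Horizon × Set (Label Name))

/-- Predictions ι : H → 2^𝓛. -/
abbrev Pred (Name : Type) : Type := Horizon → Set (Label Name)

variable {Name PName : Type}

/-- The induced blocking function [B](C) = { ℓ | ∃(C′,L′) ∈ B, C′ ⊆ C, ℓ ∈ L′ }. -/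
def blockSet (B : Blocking Name) (C : Horizon) : Set (Label Name) :=
  { ℓ | ∃ C' L, (C', L) ∈ B ∧ C' ≤ C ∧ ℓ ∈ L }

/-- B′ ⊑ B iff [B′](C) ⊆ [B](C) for all C. -/
def bleq (B' B : Blocking Name) : Prop :=
  ∀ C : Horizon, blockSet B' C ⊆ blockSet B C

/-- ι′ ⊑ ι iff ι′(C) ⊆ ι(C) for all C. -/
def pleq (ι' ι : Pred Name) : Prop :=
  ∀ C : Horizon, ι' C ⊆ ι C

/-- Pointwise union ι1 + ι2 of predictions. -/
def predAdd (ι1 ι2 : Pred Name) : Pred Name := fun C => ι1 C ∪ ι2 C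

/-- The empty prediction ι^∅. -/
def emptyPred : Pred Name := fun _ => ∅

/-- eschews(ι, B): for all (C,L′) ∈ B, ι(C) ∩ {ℓ̄ | ℓ ∈ L′} = ∅. -/
def eschews (ι : Pred Name) (B : Blocking Name) : Prop :=
  ∀ C L, (C, L) ∈ B → ι C ∩ (Label.bar '' L) = ∅

/-- Process terms of single-clock CCSˡᵐ (threads are merged into the process grammar):
process names, parallel composition, restriction, inactive 0_C, prefix α:L′.P, and sum. -/
inductive Proc (Name PName : Type) : Type
  | name : PName → Proc Name PName
  | par : Proc Name PName → Proc Name PName → Proc Name PName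
  | restr : Proc Name PName → Set Name → Proc Name PName
  | nil : Horizon → Proc Name PName
  | pre : Act Name → Set (Label Name) → Proc Name PName → Proc Name PName
  | sum : Proc Name PName → Proc Name PName → Proc Name PName

/-- The labels A′ ∪ Ā′ of a set A′ of channel names. -/
def chanLabels (A : Set Name) : Set (Label Name) :=
  { ℓ | ∃ a ∈ A, ℓ = .pos a ∨ ℓ = .neg a }

/-- σ ∈ 𝓛(P): the clock occurs free in P (through unfolding of process names). -/
inductive HasClock (env : PName → Proc Name PName) : Proc Name PName → Prop
  | nil : HasClock env (.nil true)
  | preClock (L : Set (Label Name)) (P : Proc Name PName) :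
      HasClock env (.pre (.lab .clock) L P)
  | preCont {P : Proc Name PName} (α : Act Name) (L : Set (Label Name)) :
      HasClock env P → HasClock env (.pre α L P)
  | parL {P : Proc Name PName} (Q : Proc Name PName) :
      HasClock env P → HasClock env (.par P Q)
  | parR (P : Proc Name PName) {Q : Proc Name PName} :
      HasClock env Q → HasClock env (.par P Q)
  | sumL {M : Proc Name PName} (N : Proc Name PName) :
      HasClock env M → HasClock env (.sum M N)
  | sumR (M : Proc Name PName) {N : Proc Name PName} :
      HasClock env N → HasClock env (.sum M N)
  | restr {P : Proc Name PName} (A : Set Name) :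
      HasClock env P → HasClock env (.restr P A)
  | name (p : PName) : HasClock env (env p) → HasClock env (.name p)

open Classical in
/-- The clock horizon clk(P) = 𝓛(P) ∩ {σ} ∈ H. -/
noncomputable def clk (env : PName → Proc Name PName) (P : Proc Name PName) : Horizon :=
  if HasClock env P then true else false

/-- Initial actions iA of a thread (as a set of labels; τ contributes nothing to predictions). -/
def iA : Proc Name PName → Set (Label Name)
  | .pre α _ _ => α.labels
  | .sum M N => iA M ∪ iA N
  | _ => ∅

/-- One level of the bounded syntactic prediction; `rec` handles process names
(it is the bounded prediction at the next-lower unfolding bound). -/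
def wilAgo (env : PName → Proc Name PName)
    (rec : Horizon → Proc Name PName → Set (Label Name)) :
    Horizon → Proc Name PName → Set (Label Name)
  | _, .nil _ => ∅
  | C, .pre (.lab .clock) _ P =>
      if C = true then {Label.clock} else insert Label.clock (wilAgo env rec C P)
  | C, .pre α _ P => α.labels ∪ wilAgo env rec C P
  | C, .restr P A => wilAgo env rec C P \ chanLabels A
  | C, .name p => rec C (env p)
  | C, .par P Q => wilAgo env rec C P ∪ wilAgo env rec C Q
  | C, .sum M N => wilAgo env rec C M ∪ wilAgo env rec C N

/-- The bounded syntactic prediction wilAⁿ_C(P) with at most n unfoldings of process names. -/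
def wilA (env : PName → Proc Name PName) : ℕ → Horizon → Proc Name PName → Set (Label Name)
  | 0 => wilAgo env fun _ _ => ∅
  | n + 1 => wilAgo env (wilA env n)

/-- iA*_C(P) = ⋃ₙ wilAⁿ_C(P): the labels occurring syntactically in P before any clock in C. -/
def iAstar (env : PName → Proc Name PName) (C : Horizon) (P : Proc Name PName) :
    Set (Label Name) :=
  ⋃ n : ℕ, wilA env n C P

/-- The prediction iA*₋(P) : C ↦ iA*_C(P). -/
def iAstarPred (env : PName → Proc Name PName) (P : Proc Name PName) : Pred Name :=
  fun C => iAstar env C P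

/-- Restriction B↾A of a blocking relation: remove A ∪ Ā from each entry. -/
def restrB (B : Blocking Name) (A : Set Name) : Blocking Name :=
  { q | ∃ C L, (C, L) ∈ B ∧ q = (C, L \ chanLabels A) }

/-- Restriction ι↾A of a prediction: remove A ∪ Ā pointwise. -/
def restrPred (ι : Pred Name) (A : Set Name) : Pred Name :=
  fun C => ι C \ chanLabels A

/-- Result ℓ ∥ ℓ̄ of synchronisation: a ∥ ā = τ and σ ∥ σ = σ. -/
def syncAct {Name : Type} : Label Name → Act Name
  | .clock => .lab .clock
  | _ => .tau

/-- The strategic labelled transition system of single-clock CCSˡᵐ (Fig. 1):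
P —α:B[ι]→ Q. -/
inductive Step (env : PName → Proc Name PName) :
    Proc Name PName → Act Name → Blocking Name → Pred Name → Proc Name PName → Prop
  | act (α : Act Name) (L : Set (Label Name)) (P : Proc Name PName) :
      Step env (.pre α L P) α {(clk env P, L)} emptyPred P
  | sumL {M : Proc Name PName} {α : Act Name} {B : Blocking Name} {ι : Pred Name}
      {P : Proc Name PName} (N : Proc Name PName) :
      Step env M α B ι P →
      Step env (.sum M N) α B (fun C => ι C ∪ (iA N \ α.labels)) P
  | sumR (M : Proc Name PName) {N : Proc Name PName} {α : Act Name} {B : Blocking Name}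
      {ι : Pred Name} {P : Proc Name PName} :
      Step env N α B ι P →
      Step env (.sum M N) α B (fun C => ι C ∪ (iA M \ α.labels)) P
  | con {p : PName} {α : Act Name} {B : Blocking Name} {ι : Pred Name} {P' : Proc Name PName} :
      Step env (env p) α B ι P' →
      Step env (.name p) α B ι P'
  | com {P1 P2 P1' P2' : Proc Name PName} {ℓ : Label Name} {B1 B2 : Blocking Name}
      {ι1 ι2 : Pred Name} :
      Step env P1 (.lab ℓ) B1 ι1 P1' →
      Step env P2 (.lab ℓ.bar) B2 ι2 P2' →
      eschews ι1 B2 → eschews ι2 B1 →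
      Step env (.par P1 P2) (syncAct ℓ) (B1 ∪ B2) (predAdd ι1 ι2) (.par P1' P2')
  | parL {P : Proc Name PName} {α : Act Name} {B : Blocking Name} {ι : Pred Name}
      {P' : Proc Name PName} (Q : Proc Name PName) :
      Step env P α B ι P' →
      (α = .lab .clock → ¬ HasClock env Q) →
      eschews (iAstarPred env Q) B →
      Step env (.par P Q) α B (predAdd ι (iAstarPred env Q)) (.par P' Q)
  | parR (P : Proc Name PName) {Q : Proc Name PName} {α : Act Name} {B : Blocking Name}
      {ι : Pred Name} {Q' : Proc Name PName} :
      Step env Q α B ι Q' →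
      (α = .lab .clock → ¬ HasClock env P) →
      eschews (iAstarPred env P) B →
      Step env (.par P Q) α B (predAdd ι (iAstarPred env P)) (.par P Q')
  | restr {P : Proc Name PName} {α : Act Name} {B : Blocking Name} {ι : Pred Name}
      {Q : Proc Name PName} (A : Set Name) :
      Step env P α B ι Q →
      (∀ ℓ, α = .lab ℓ → ℓ ∉ chanLabels A) →
      Step env (.restr P A) α (restrB B A) (restrPred ι A) (.restr Q A)

/-- One strategic step (labels existentially quantified). -/
def Tr (env : PName → Proc Name PName) (P Q : Proc Name PName) : Prop :=
  ∃ α B ι, Step env P α B ι Q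

/-- Q is a derivative of P: reachable by strategic transitions. -/
def Deriv (env : PName → Proc Name PName) : Proc Name PName → Proc Name PName → Prop :=
  Relation.ReflTransGen (Tr env)

/-- A congruence on processes: an equivalence compatible with the process operators. -/
structure IsCongruence (cong : Proc Name PName → Proc Name PName → Prop) : Prop where
  equiv : Equivalence cong
  pre : ∀ (α : Act Name) (L : Set (Label Name)) {P P' : Proc Name PName},
      cong P P' → cong (.pre α L P) (.pre α L P')
  sum : ∀ {M M' N N' : Proc Name PName}, cong M M' → cong N N' → cong (.sum M N) (.sum M' N')
  par : ∀ {P P' Q Q' : Proc Name PName}, cong P P' → cong Q Q' → cong (.par P Q) (.par P' Q')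
  restr : ∀ (A : Set Name) {P P' : Proc Name PName}, cong P P' → cong (.restr P A) (.restr P' A)

/-- P is observable (modulo cong). -/
def Observable (env : PName → Proc Name PName)
    (cong : Proc Name PName → Proc Name PName → Prop) (P : Proc Name PName) : Prop :=
  ∀ Q Q1 Q2 α1 α2 B1 B2 ι1 ι2,
    Deriv env P Q →
    Step env Q α1 B1 ι1 Q1 → Step env Q α2 B2 ι2 Q2 →
    (α1 ≠ α2 ∨ ¬ cong Q1 Q2) →
    ∀ ℓ1 ℓ2 : Label Name, α1 = .lab ℓ1 → α2 = .lab ℓ2 → ℓ1 ∈ ι2 true ∧ ℓ2 ∈ ι1 true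

/-- α ∉ [B](⊤). -/
def unblockedBy (α : Act Name) (B : Blocking Name) : Prop :=
  ∀ ℓ : Label Name, α = .lab ℓ → ℓ ∉ blockSet B true

/-- Independence (modulo cong) of two transitions out of the same process. -/
def Independent (cong : Proc Name PName → Proc Name PName → Prop)
    (α1 : Act Name) (B1 : Blocking Name) (Q1 : Proc Name PName)
    (α2 : Act Name) (B2 : Blocking Name) (Q2 : Proc Name PName) : Prop :=
  (α1 = .lab .clock ∧ α2 = .lab .clock) ∨
  (α1.isRendezvousOrTau ∧ α2.isRendezvousOrTau ∧
    ((¬ (α1 = .tau ∧ α2 = .tau) ∧ unblockedBy α1 B2 ∧ unblockedBy α2 B1) ∨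
     (α1 = α2 ∧ ¬ cong Q1 Q2)))

/-- The Diamond Property (CR) of a process Q (modulo cong). -/
def DiamondCR (env : PName → Proc Name PName)
    (cong : Proc Name PName → Proc Name PName → Prop) (Q : Proc Name PName) : Prop :=
  ∀ α1 B1 ι1 Q1 α2 B2 ι2 Q2,
    Step env Q α1 B1 ι1 Q1 → Step env Q α2 B2 ι2 Q2 →
    Independent cong α1 B1 Q1 α2 B2 Q2 →
    ∃ Q1' Q2' B1' ι1' B2' ι2',
      cong Q1' Q2' ∧
      Step env Q1 α2 B2' ι2' Q1' ∧ Step env Q2 α1 B1' ι1' Q2' ∧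
      bleq B1' B1 ∧ bleq B2' B2 ∧
      (α1.isRendezvous → pleq ι1' ι1) ∧ (α2.isRendezvous → pleq ι2' ι2)

/-- P is coherent (modulo cong): observable and every derivative satisfies (CR). -/
def Coherent (env : PName → Proc Name PName)
    (cong : Proc Name PName → Proc Name PName → Prop) (P : Proc Name PName) : Prop :=
  Observable env cong P ∧ ∀ Q, Deriv env P Q → DiamondCR env cong Q

/-- N is a normal form: no τ-transitions. -/
def NormalForm (env : PName → Proc Name PName) (N : Proc Name PName) : Prop :=
  ∀ B ι N', ¬ Step env N .tau B ι N'

/-- One reduction (τ-labelled) step. -/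
def Red (env : PName → Proc Name PName) (P Q : Proc Name PName) : Prop :=
  ∃ B ι, Step env P .tau B ι Q

/-- P ⇓ N: P reduces to the normal form N by finitely many τ-steps. -/
def ReducesTo (env : PName → Proc Name PName) (P N : Proc Name PName) : Prop :=
  Relation.ReflTransGen (Red env) P N ∧ NormalForm env N

/-- Strong bisimulations for the strategic LTS (matching full strategic labels). -/
def IsStrategicBisim (env : PName → Proc Name PName)
    (R : Proc Name PName → Proc Name PName → Prop) : Prop :=
  ∀ P Q, R P Q →
    (∀ α B ι P', Step env P α B ι P' → ∃ Q', Step env Q α B ι Q' ∧ R P' Q') ∧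
    (∀ α B ι Q', Step env Q α B ι Q' → ∃ P', Step env P α B ι P' ∧ R P' Q')

/-- Strong bisimilarity for the strategic LTS. -/
def StrategicBisim (env : PName → Proc Name PName) (P Q : Proc Name PName) : Prop :=
  ∃ R, IsStrategicBisim env R ∧ R P Q

/-- Milner's CCS labelled transition system P —α→ Q on the same syntax. -/
inductive CCSStep (env : PName → Proc Name PName) :
    Proc Name PName → Act Name → Proc Name PName → Prop
  | act (α : Act Name) (L : Set (Label Name)) (P : Proc Name PName) :
      CCSStep env (.pre α L P) α P
  | sumL {M : Proc Name PName} {α : Act Name} {P : Proc Name PName} (N : Proc Name PName) :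
      CCSStep env M α P → CCSStep env (.sum M N) α P
  | sumR (M : Proc Name PName) {N : Proc Name PName} {α : Act Name} {P : Proc Name PName} :
      CCSStep env N α P → CCSStep env (.sum M N) α P
  | con {p : PName} {α : Act Name} {P' : Proc Name PName} :
      CCSStep env (env p) α P' → CCSStep env (.name p) α P'
  | com {P1 P2 P1' P2' : Proc Name PName} (ℓ : Label Name) :
      CCSStep env P1 (.lab ℓ) P1' → CCSStep env P2 (.lab ℓ.bar) P2' →
      CCSStep env (.par P1 P2) .tau (.par P1' P2')
  | parL {P : Proc Name PName} {α : Act Name} {P' : Proc Name PName} (Q : Proc Name PName) :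
      CCSStep env P α P' → CCSStep env (.par P Q) α (.par P' Q)
  | parR (P : Proc Name PName) {Q : Proc Name PName} {α : Act Name} {Q' : Proc Name PName} :
      CCSStep env Q α Q' → CCSStep env (.par P Q) α (.par P Q')
  | restr {P : Proc Name PName} {α : Act Name} {Q : Proc Name PName} (A : Set Name) :
      CCSStep env P α Q → (∀ ℓ, α = .lab ℓ → ℓ ∉ chanLabels A) →
      CCSStep env (.restr P A) α (.restr Q A)

def CCSTr (env : PName → Proc Name PName) (P Q : Proc Name PName) : Prop :=
  ∃ α, CCSStep env P α Q

def CCSDeriv (env : PName → Proc Name PName) : Proc Name PName → Proc Name PName → Prop :=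
  Relation.ReflTransGen (CCSTr env)

/-- Strong bisimulations for Milner's CCS LTS. -/
def IsCCSBisim (env : PName → Proc Name PName)
    (R : Proc Name PName → Proc Name PName → Prop) : Prop :=
  ∀ P Q, R P Q →
    (∀ α P', CCSStep env P α P' → ∃ Q', CCSStep env Q α Q' ∧ R P' Q') ∧
    (∀ α Q', CCSStep env Q α Q' → ∃ P', CCSStep env P α P' ∧ R P' Q')

/-- Strong bisimilarity ∼ for Milner's CCS. -/
def CCSBisim (env : PName → Proc Name PName) (P Q : Proc Name PName) : Prop :=
  ∃ R, IsCCSBisim env R ∧ R P Q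

/-- P is determinate (modulo ∼) in Milner's CCS. -/
def CCSDeterminate (env : PName → Proc Name PName) (P : Proc Name PName) : Prop :=
  ∀ Q, CCSDeriv env P Q → ∀ α Q1 Q2,
    CCSStep env Q α Q1 → CCSStep env Q α Q2 → CCSBisim env Q1 Q2

/-- P is strongly confluent (modulo ∼) in Milner's CCS. -/
def CCSStronglyConfluent (env : PName → Proc Name PName) (P : Proc Name PName) : Prop :=
  CCSDeterminate env P ∧
  ∀ Q, CCSDeriv env P Q → ∀ α1 α2 Q1 Q2, α1 ≠ α2 →
    CCSStep env Q α1 Q1 → CCSStep env Q α2 Q2 →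
    ∃ Q1' Q2', CCSBisim env Q1' Q2' ∧ CCSStep env Q1 α2 Q1' ∧ CCSStep env Q2 α1 Q2'

/-- The clock-free, priority-free fragment: inactive subterms are 0_⊥, no prefix action is σ,
and all blocking sets are empty. -/
def ClockFree : Proc Name PName → Prop
  | .nil C => C = false
  | .pre α L P => α ≠ .lab .clock ∧ L = ∅ ∧ ClockFree P
  | .sum M N => ClockFree M ∧ ClockFree N
  | .par P Q => ClockFree P ∧ ClockFree Q
  | .restr P _ => ClockFree P
  | .name _ => True

/-- Well-formedness: direct subprocesses of threads have the same clock horizon as the thread. -/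
def WF (env : PName → Proc Name PName) : Proc Name PName → Prop
  | .nil _ => True
  | .pre α L P => WF env P ∧ (HasClock env (.pre α L P) ↔ HasClock env P)
  | .sum M N => WF env M ∧ WF env N ∧ (HasClock env M ↔ HasClock env N)
  | .par P Q => WF env P ∧ WF env Q
  | .restr P _ => WF env P
  | .name _ => True

/-- P has exactly one derivable strategic transition, namely α to Q (with some label B[ι]). -/
def UniqueStep (env : PName → Proc Name PName) (P : Proc Name PName) (α : Act Name)
    (Q : Proc Name PName) : Prop :=
  ∃ B ι, Step env P α B ι Q ∧
    ∀ α' B' ι' Q', Step env P α' B' ι' Q' → α' = α ∧ B' = B ∧ ι' = ι ∧ Q' = Q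

end CCSlm

namespace CCSlm

section Aux

variable {Name PName : Type} {env : PName → Proc Name PName}
  {cong : Proc Name PName → Proc Name PName → Prop}

/-- Transport a reduction sequence along the congruence. -/
lemma transport_reds
    (hcompat : ∀ P Q, cong P Q → ∀ α B ι P', Step env P α B ι P' →
      ∃ Q', Step env Q α B ι Q' ∧ cong P' Q')
    (hsymm : ∀ {a b}, cong a b → cong b a)
    {B C : Proc Name PName} (h : Relation.ReflTransGen (Red env) B C) :
    ∀ A, cong A B → ∃ C', Relation.ReflTransGen (Red env) A C' ∧ cong C' C := by
  induction h using Relation.ReflTransGen.head_induction_on with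
  | refl => exact fun A hA => ⟨A, Relation.ReflTransGen.refl, hA⟩
  | head hstep _ ih =>
    rename_i B B1 _
    intro A hA
    obtain ⟨ι, Bk, s⟩ := hstep
    obtain ⟨A1, sA, hc⟩ := hcompat _ _ (hsymm hA) _ _ _ _ s
    obtain ⟨C', hr, hc'⟩ := ih A1 (hsymm hc)
    exact ⟨C', Relation.ReflTransGen.head ⟨_, _, sA⟩ hr, hc'⟩

lemma red_deriv {Q Qa : Proc Name PName} {P : Proc Name PName}
    (hD : Deriv env P Q) (h : Red env Q Qa) : Deriv env P Qa :=
  Relation.ReflTransGen.tail hD ⟨_, _, _, h.choose_spec.choose_spec⟩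

lemma reds_deriv {Q Qa : Proc Name PName} {P : Proc Name PName}
    (hD : Deriv env P Q) (h : Relation.ReflTransGen (Red env) Q Qa) : Deriv env P Qa := by
  induction h with
  | refl => exact hD
  | tail _ hstep ih => exact red_deriv ih hstep

/-- One-step diamond modulo cong for τ-reductions of derivatives. -/
lemma one_step_diamond {P : Proc Name PName}
    (hP : Coherent env cong P) {Q Q1 Q2 : Proc Name PName}
    (hD : Deriv env P Q) (h1 : Red env Q Q1) (h2 : Red env Q Q2) :
    cong Q1 Q2 ∨ ∃ Q1' Q2', cong Q1' Q2' ∧ Red env Q1 Q1' ∧ Red env Q2 Q2' := by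
  by_cases hc : cong Q1 Q2
  · exact Or.inl hc
  · obtain ⟨B1, ι1, s1⟩ := h1
    obtain ⟨B2, ι2, s2⟩ := h2
    have hind : Independent cong .tau B1 Q1 .tau B2 Q2 :=
      Or.inr ⟨trivial, trivial, Or.inr ⟨rfl, hc⟩⟩
    obtain ⟨Q1', Q2', B1', ι1', B2', ι2', hcc, t1, t2, -⟩ :=
      hP.2 Q hD _ _ _ _ _ _ _ _ s1 s2 hind
    exact Or.inr ⟨Q1', Q2', hcc, ⟨_, _, t1⟩, ⟨_, _, t2⟩⟩

/-- Strip lemma: one step vs many steps, modulo cong. -/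
lemma strip_lemma {P : Proc Name PName}
    (hcompat : ∀ P Q, cong P Q → ∀ α B ι P', Step env P α B ι P' →
      ∃ Q', Step env Q α B ι Q' ∧ cong P' Q')
    (hrefl : ∀ a, cong a a)
    (hsymm : ∀ {a b}, cong a b → cong b a)
    (htrans : ∀ {a b c}, cong a b → cong b c → cong a c)
    (hP : Coherent env cong P) {Q Q2 : Proc Name PName}
    (h2 : Relation.ReflTransGen (Red env) Q Q2) :
    Deriv env P Q → ∀ Q1, Red env Q Q1 →
    ∃ Q1' Q2', cong Q1' Q2' ∧ Relation.ReflTransGen (Red env) Q1 Q1' ∧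
      Relation.ReflTransGen (Red env) Q2 Q2' := by
  induction h2 using Relation.ReflTransGen.head_induction_on with
  | refl =>
    intro hD Q1 h1
    exact ⟨Q1, Q1, hrefl Q1, Relation.ReflTransGen.refl, Relation.ReflTransGen.single h1⟩
  | head hstep hrest ih =>
    rename_i Q Qa
    intro hD Q1 h1
    rcases one_step_diamond hP hD h1 hstep with hc | ⟨Q1a, Qaa, hc, r1, ra⟩
    · obtain ⟨Q2'', hr, hc'⟩ := transport_reds hcompat hsymm hrest Q1 hc
      exact ⟨Q2'', Q2, hc', hr, Relation.ReflTransGen.refl⟩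
    · obtain ⟨Qa', Q2', hc2, hra, hr2⟩ := ih (red_deriv hD hstep) _ ra
      obtain ⟨Q1'', hr1, hc1⟩ := transport_reds hcompat hsymm hra Q1a hc
      exact ⟨Q1'', Q2', htrans hc1 hc2, Relation.ReflTransGen.head r1 hr1, hr2⟩

/-- Confluence modulo cong of τ-reduction on derivatives of a coherent process. -/
lemma confluence {P : Proc Name PName}
    (hcompat : ∀ P Q, cong P Q → ∀ α B ι P', Step env P α B ι P' →
      ∃ Q', Step env Q α B ι Q' ∧ cong P' Q')
    (hrefl : ∀ a, cong a a)
    (hsymm : ∀ {a b}, cong a b → cong b a)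
    (htrans : ∀ {a b c}, cong a b → cong b c → cong a c)
    (hP : Coherent env cong P) {Q Q1 : Proc Name PName}
    (h1 : Relation.ReflTransGen (Red env) Q Q1) :
    Deriv env P Q → ∀ Q2, Relation.ReflTransGen (Red env) Q Q2 →
    ∃ Q1' Q2', cong Q1' Q2' ∧ Relation.ReflTransGen (Red env) Q1 Q1' ∧
      Relation.ReflTransGen (Red env) Q2 Q2' := by
  induction h1 using Relation.ReflTransGen.head_induction_on with
  | refl =>
    intro hD Q2 h2
    exact ⟨Q2, Q2, hrefl Q2, h2, Relation.ReflTransGen.refl⟩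
  | head hstep hrest ih =>
    rename_i Q Qa
    intro hD Q2 h2
    obtain ⟨Qa', Q2', hc, hra, hr2⟩ :=
      strip_lemma hcompat hrefl hsymm htrans hP h2 hD _ hstep
    obtain ⟨Q1', Qa'', hc1, hr1, hra'⟩ := ih (red_deriv hD hstep) _ hra
    obtain ⟨Q2'', hr2', hc2⟩ := transport_reds hcompat hsymm hra' Q2' (hsymm hc)
    exact ⟨Q1', Q2'', htrans hc1 (hsymm hc2), hr1, hr2.trans hr2'⟩

lemma nf_reds_eq {N Q : Proc Name PName} (hN : NormalForm env N)
    (h : Relation.ReflTransGen (Red env) N Q) : Q = N := by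
  induction h using Relation.ReflTransGen.head_induction_on with
  | refl => rfl
  | head hstep _ _ =>
    obtain ⟨B, ι, s⟩ := hstep
    exact absurd s (hN _ _ _)

end Aux

/-- Lemma 1 (unique normal forms for coherent processes): if P is coherent modulo a
congruence ≅ (compatible with the strategic transitions), and P ⇓ N1 and P ⇓ N2,
then N1 ≅ N2. -/
theorem unique_normal_forms {Name PName : Type} (env : PName → Proc Name PName)
    (cong : Proc Name PName → Proc Name PName → Prop)
    (hcong : IsCongruence cong)
    (hcompat : ∀ P Q, cong P Q → ∀ α B ι P', Step env P α B ι P' →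
      ∃ Q', Step env Q α B ι Q' ∧ cong P' Q')
    (P N1 N2 : Proc Name PName)
    (hP : Coherent env cong P)
    (h1 : ReducesTo env P N1) (h2 : ReducesTo env P N2) :
    cong N1 N2 := by
  obtain ⟨hr1, hn1⟩ := h1
  obtain ⟨hr2, hn2⟩ := h2
  obtain ⟨Q1', Q2', hc, ha, hb⟩ :=
    confluence hcompat (fun a => hcong.equiv.refl a) (fun h => hcong.equiv.symm h)
      (fun h h' => hcong.equiv.trans h h') hP hr1 Relation.ReflTransGen.refl N2 hr2
  rw [nf_reds_eq hn1 ha, nf_reds_eq hn2 hb] at hc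
  exact hc

end CCSlm
end

section
/- Preservation of coherence under restriction (Theorem 2, second part): if P is a coherent process (modulo a congruence ≅) of single-clock CCSˡᵐ and A′ is a set of channel names, then P↾A′ is coherent (modulo ≅). -/
namespace CCSlm

section Aux

variable {Name PName : Type}

lemma step_restr_inv {env : PName → Proc Name PName} {P : Proc Name PName} {A : Set Name}
    {α : Act Name} {B : Blocking Name} {ι : Pred Name} {Q : Proc Name PName}
    (h : Step env (.restr P A) α B ι Q) :
    ∃ B0 ι0 Q0, Step env P α B0 ι0 Q0 ∧ B = restrB B0 A ∧ ι = restrPred ι0 A ∧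
      Q = .restr Q0 A ∧ ∀ ℓ, α = .lab ℓ → ℓ ∉ chanLabels A := by
  cases h with
  | restr A h hside => exact ⟨_, _, _, h, rfl, rfl, rfl, hside⟩

lemma deriv_restr_inv {env : PName → Proc Name PName} {P : Proc Name PName} {A : Set Name}
    {R : Proc Name PName} (h : Deriv env (.restr P A) R) :
    ∃ Q, Deriv env P Q ∧ R = .restr Q A := by
  induction h with
  | refl => exact ⟨P, Relation.ReflTransGen.refl, rfl⟩
  | tail _ htr ih =>
    obtain ⟨Q, hQ, rfl⟩ := ih
    obtain ⟨α, B, ι, hstep⟩ := htr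
    obtain ⟨B0, ι0, Q0, h0, -, -, rfl, -⟩ := step_restr_inv hstep
    exact ⟨Q0, hQ.tail ⟨_, _, _, h0⟩, rfl⟩

lemma blockSet_restrB (B : Blocking Name) (A : Set Name) (C : Horizon) :
    blockSet (restrB B A) C = blockSet B C \ chanLabels A := by
  ext ℓ
  constructor
  · rintro ⟨D, L, ⟨D2, L2, hmem, heq⟩, hle, hℓ⟩
    injection heq with h1 h2
    subst h1; subst h2
    exact ⟨⟨_, _, hmem, hle, hℓ.1⟩, hℓ.2⟩
  · rintro ⟨⟨C', L, hmem, hle, hℓ⟩, hnot⟩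
    exact ⟨C', L \ chanLabels A, ⟨C', L, hmem, rfl⟩, hle, hℓ, hnot⟩

lemma bleq_restrB {B' B : Blocking Name} (A : Set Name) (h : bleq B' B) :
    bleq (restrB B' A) (restrB B A) := by
  intro C
  rw [blockSet_restrB, blockSet_restrB]
  exact Set.diff_subset_diff_left (h C)

lemma pleq_restrPred {ι' ι : Pred Name} (A : Set Name) (h : pleq ι' ι) :
    pleq (restrPred ι' A) (restrPred ι A) := by
  intro C
  exact Set.diff_subset_diff_left (h C)

end Aux

/-- Theorem 2, second part: coherence is preserved by restriction. -/
theorem coherence_preserved_by_restriction {Name PName : Type} (env : PName → Proc Name PName)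
    (cong : Proc Name PName → Proc Name PName → Prop)
    (hcong : IsCongruence cong)
    (P : Proc Name PName) (A' : Set Name)
    (hP : Coherent env cong P) :
    Coherent env cong (.restr P A') := by
  obtain ⟨hobs, hcr⟩ := hP
  constructor
  · intro Q Q1 Q2 α1 α2 B1 B2 ι1 ι2 hderiv h1 h2 hne ℓ1 ℓ2 e1 e2
    obtain ⟨Q0, hQ0, rfl⟩ := deriv_restr_inv hderiv
    obtain ⟨B1', ι1', Q1', h1', rfl, rfl, rfl, hs1⟩ := step_restr_inv h1
    obtain ⟨B2', ι2', Q2', h2', rfl, rfl, rfl, hs2⟩ := step_restr_inv h2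
    have hne' : α1 ≠ α2 ∨ ¬ cong Q1' Q2' := by
      rcases hne with h | h
      · exact Or.inl h
      · exact Or.inr fun hc => h (hcong.restr A' hc)
    obtain ⟨m1, m2⟩ := hobs Q0 Q1' Q2' α1 α2 B1' B2' ι1' ι2' hQ0 h1' h2' hne' ℓ1 ℓ2 e1 e2
    exact ⟨⟨m1, hs1 ℓ1 e1⟩, ⟨m2, hs2 ℓ2 e2⟩⟩
  · intro R hderiv α1 B1 ι1 Q1 α2 B2 ι2 Q2 h1 h2 hind
    obtain ⟨Q0, hQ0, rfl⟩ := deriv_restr_inv hderiv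
    obtain ⟨B1', ι1', Q1', h1', rfl, rfl, rfl, hs1⟩ := step_restr_inv h1
    obtain ⟨B2', ι2', Q2', h2', rfl, rfl, rfl, hs2⟩ := step_restr_inv h2
    have hind' : Independent cong α1 B1' Q1' α2 B2' Q2' := by
      rcases hind with ⟨e1, e2⟩ | ⟨r1, r2, ⟨hnt, u1, u2⟩ | ⟨heq, hnc⟩⟩
      · exact Or.inl ⟨e1, e2⟩
      · refine Or.inr ⟨r1, r2, Or.inl ⟨hnt, ?_, ?_⟩⟩
        · intro ℓ e hmem
          exact u1 ℓ e (by rw [blockSet_restrB]; exact ⟨hmem, hs1 ℓ e⟩)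
        · intro ℓ e hmem
          exact u2 ℓ e (by rw [blockSet_restrB]; exact ⟨hmem, hs2 ℓ e⟩)
      · exact Or.inr ⟨r1, r2, Or.inr ⟨heq, fun hc => hnc (hcong.restr A' hc)⟩⟩
    obtain ⟨R1, R2, C1, κ1, C2, κ2, hcQ, s1, s2, hb1, hb2, hp1, hp2⟩ :=
      hcr Q0 hQ0 α1 B1' ι1' Q1' α2 B2' ι2' Q2' h1' h2' hind'
    exact ⟨.restr R1 A', .restr R2 A', restrB C1 A', restrPred κ1 A',
      restrB C2 A', restrPred κ2 A', hcong.restr A' hcQ,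
      Step.restr A' s1 hs2, Step.restr A' s2 hs1,
      bleq_restrB A' hb1, bleq_restrB A' hb2,
      fun hr => pleq_restrPred A' (hp1 hr), fun hr => pleq_restrPred A' (hp2 hr)⟩

end CCSlm
end

section
/- Antitonicity of predictions (Constructivity Assumption, proved by induction on the LTS rules): for every strategic transition P —α:B[ι]→ Q derivable in the labelled transition system of single-clock CCSˡᵐ, the prediction ι is antitone in the clock horizon: for all clock horizons C, C′ ∈ H, if C ⊆ C′ then ι(C′) ⊆ ι(C). -/
namespace CCSlm

private lemma wilAgo_antitone {Name PName : Type} (env : PName → Proc Name PName)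
    (rec : Horizon → Proc Name PName → Set (Label Name))
    (hrec : ∀ (C C' : Horizon) P, C ≤ C' → rec C' P ⊆ rec C P) :
    ∀ (C C' : Horizon) (P : Proc Name PName), C ≤ C' →
      wilAgo env rec C' P ⊆ wilAgo env rec C P := by
  intro C C' P
  induction P with
  | nil h => intro _; simp [wilAgo]
  | name p => intro h; simpa [wilAgo] using hrec C C' (env p) h
  | par P Q ihP ihQ =>
      intro h; simp only [wilAgo]; exact Set.union_subset_union (ihP h) (ihQ h)
  | sum M N ihM ihN =>
      intro h; simp only [wilAgo]; exact Set.union_subset_union (ihM h) (ihN h)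
  | restr P A ih =>
      intro h; simp only [wilAgo]; exact Set.diff_subset_diff_left (ih h)
  | pre α L P ih =>
      intro h
      match α with
      | .tau => simp only [wilAgo]; exact Set.union_subset_union subset_rfl (ih h)
      | .lab (.pos a) => simp only [wilAgo]; exact Set.union_subset_union subset_rfl (ih h)
      | .lab (.neg a) => simp only [wilAgo]; exact Set.union_subset_union subset_rfl (ih h)
      | .lab .clock =>
          match C, C' with
          | false, false => exact subset_rfl
          | true, true => simp [wilAgo]
          | false, true =>
              simp only [wilAgo, if_pos rfl, if_neg Bool.false_ne_true]
              intro x hx; simp at hx; subst hx; exact Set.mem_insert _ _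
          | true, false => exact absurd h (by decide)

private lemma wilA_antitone {Name PName : Type} (env : PName → Proc Name PName)
    (n : ℕ) : ∀ (C C' : Horizon) (P : Proc Name PName), C ≤ C' →
      wilA env n C' P ⊆ wilA env n C P := by
  induction n with
  | zero => exact wilAgo_antitone env _ (fun _ _ _ _ => subset_rfl)
  | succ n ih => exact wilAgo_antitone env _ ih

private lemma iAstarPred_antitone {Name PName : Type} (env : PName → Proc Name PName)
    (P : Proc Name PName) (C C' : Horizon) (h : C ≤ C') :
    iAstarPred env P C' ⊆ iAstarPred env P C := by
  intro x hx
  simp only [iAstarPred, iAstar, Set.mem_iUnion] at hx ⊢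
  obtain ⟨n, hn⟩ := hx
  exact ⟨n, wilA_antitone env n C C' P h hn⟩

/-- Antitonicity of predictions (Constructivity Assumption): for every derivable strategic
transition P —α:B[ι]→ Q, if C ⊆ C′ then ι(C′) ⊆ ι(C). -/
theorem prediction_antitone {Name PName : Type} (env : PName → Proc Name PName)
    {P Q : Proc Name PName} {α : Act Name} {B : Blocking Name} {ι : Pred Name}
    (h : Step env P α B ι Q) :
    ∀ C C' : Horizon, C ≤ C' → ι C' ⊆ ι C := by
  induction h with
  | act => intro C C' _; simp [emptyPred]
  | sumL N _ ih =>
      intro C C' h; exact Set.union_subset_union (ih C C' h) subset_rfl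
  | sumR M _ ih =>
      intro C C' h; exact Set.union_subset_union (ih C C' h) subset_rfl
  | con _ ih => exact ih
  | com _ _ _ _ ih1 ih2 =>
      intro C C' h; exact Set.union_subset_union (ih1 C C' h) (ih2 C C' h)
  | parL Q _ _ _ ih =>
      intro C C' h
      exact Set.union_subset_union (ih C C' h) (iAstarPred_antitone env Q C C' h)
  | parR P _ _ _ ih =>
      intro C C' h
      exact Set.union_subset_union (ih C C' h) (iAstarPred_antitone env P C C' h)
  | restr A _ _ ih =>
      intro C C' h; exact Set.diff_subset_diff_left (ih C C' h)

end CCSlm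
end

section
/- Antitonicity of eschews: for all predictions ι, ι′ and blocking relations B, B′ of single-clock CCSˡᵐ, if ι′ ⊑ ι, B′ ⊑ B, and eschews(ι, B) holds, then eschews(ι′, B′) holds. -/
namespace CCSlm

/-- Antitonicity of eschews: if ι′ ⊑ ι, B′ ⊑ B and eschews(ι, B), then eschews(ι′, B′)
(for predictions that are antitone in the clock horizon, as all LTS predictions are). -/
theorem eschews_antitone {Name : Type} (ι ι' : Pred Name) (B B' : Blocking Name)
    (hι : ∀ C C' : Horizon, C ≤ C' → ι C' ⊆ ι C)
    (hι' : ∀ C C' : Horizon, C ≤ C' → ι' C' ⊆ ι' C)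
    (hle : pleq ι' ι) (hBle : bleq B' B)
    (h : eschews ι B) :
    eschews ι' B' := by
  intro C L hBL
  ext ℓ
  simp only [Set.mem_inter_iff, Set.mem_image, Set.mem_empty_iff_false, iff_false, not_and]
  rintro hℓ ⟨m, hm, rfl⟩
  have hmB' : m ∈ blockSet B' C := ⟨C, L, hBL, le_refl _, hm⟩
  obtain ⟨C0, L0, hB0, hC0, hm0⟩ := hBle C hmB'
  have := h C0 L0 hB0
  have hℓι : m.bar ∈ ι C0 := hι C0 C hC0 (hle C hℓ)
  have : m.bar ∈ ι C0 ∩ Label.bar '' L0 := ⟨hℓι, m, hm0, rfl⟩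
  simp_all

end CCSlm
end

section
/- Conservative extension of CCS: for processes P, Q in the clock-free, priority-free fragment of single-clock CCSˡᵐ (all inactive subterms are 0_⊥, no prefix has action σ, and every prefix α:L′.P has empty blocking set L′ = ∅) and every action α, there exist a blocking relation B and prediction ι with P —α:B[ι]→ Q derivable in the strategic LTS of CCSˡᵐ if and only if P —α→ Q is derivable in Milner's CCS (with the same prefix, sum, parallel, restriction and recursion structure). -/
namespace CCSlm

variable {Name PName : Type}

lemma eschews_of_empty {ι : Pred Name} {B : Blocking Name}
    (h : ∀ C L, (C, L) ∈ B → L = ∅) : eschews ι B := by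
  intro C L hCL
  rw [h C L hCL]
  simp

lemma step_clockfree_facts {env : PName → Proc Name PName}
    (henv : ∀ p, ClockFree (env p))
    {P : Proc Name PName} {α : Act Name} {B : Blocking Name} {ι : Pred Name}
    {Q : Proc Name PName} (h : Step env P α B ι Q) (hP : ClockFree P) :
    α ≠ Act.lab .clock ∧ (∀ C L, (C, L) ∈ B → L = ∅) := by
  induction h with
  | act α L P =>
      obtain ⟨h1, h2, _⟩ := hP
      refine ⟨h1, ?_⟩
      rintro C L' hm
      simp only [Set.mem_singleton_iff, Prod.mk.injEq] at hm
      rw [hm.2, h2]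
  | sumL N h ih => exact ih hP.1
  | sumR M h ih => exact ih hP.2
  | con h ih => exact ih (henv _)
  | @com P1 P2 P1' P2' ℓ B1 B2 ι1 ι2 h1 h2 e1 e2 ih1 ih2 =>
      obtain ⟨n1, b1⟩ := ih1 hP.1
      obtain ⟨n2, b2⟩ := ih2 hP.2
      constructor
      · cases ℓ with
        | pos a => simp [syncAct]
        | neg a => simp [syncAct]
        | clock => exact absurd rfl n1
      · rintro C L (hm | hm)
        · exact b1 C L hm
        · exact b2 C L hm
  | parL Q h hclk hesch ih => exact ih hP.1
  | parR P h hclk hesch ih => exact ih hP.2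
  | restr A h hn ih =>
      obtain ⟨n, b⟩ := ih hP
      refine ⟨n, ?_⟩
      rintro C L ⟨C', L', hm, heq⟩
      injection heq with h1 h2
      subst h1; subst h2
      rw [b _ _ hm]
      simp

lemma step_to_ccs {env : PName → Proc Name PName}
    (henv : ∀ p, ClockFree (env p))
    {P : Proc Name PName} {α : Act Name} {B : Blocking Name} {ι : Pred Name}
    {Q : Proc Name PName} (h : Step env P α B ι Q) (hP : ClockFree P) :
    CCSStep env P α Q := by
  induction h with
  | act α L P => exact CCSStep.act α L P
  | sumL N h ih => exact CCSStep.sumL N (ih hP.1)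
  | sumR M h ih => exact CCSStep.sumR M (ih hP.2)
  | con h ih => exact CCSStep.con (ih (henv _))
  | @com P1 P2 P1' P2' ℓ B1 B2 ι1 ι2 h1 h2 e1 e2 ih1 ih2 =>
      have n1 := (step_clockfree_facts henv h1 hP.1).1
      cases ℓ with
      | pos a => exact CCSStep.com _ (ih1 hP.1) (ih2 hP.2)
      | neg a => exact CCSStep.com _ (ih1 hP.1) (ih2 hP.2)
      | clock => exact absurd rfl n1
  | parL Q h hclk hesch ih => exact CCSStep.parL Q (ih hP.1)
  | parR P h hclk hesch ih => exact CCSStep.parR P (ih hP.2)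
  | restr A h hn ih => exact CCSStep.restr A (ih hP) hn

lemma ccs_to_step {env : PName → Proc Name PName}
    (henv : ∀ p, ClockFree (env p))
    {P : Proc Name PName} {α : Act Name}
    {Q : Proc Name PName} (h : CCSStep env P α Q) (hP : ClockFree P) :
    ∃ B ι, Step env P α B ι Q := by
  induction h with
  | act α L P => exact ⟨_, _, Step.act α L P⟩
  | sumL N h ih =>
      obtain ⟨B, ι, hs⟩ := ih hP.1
      exact ⟨B, _, Step.sumL N hs⟩
  | sumR M h ih =>
      obtain ⟨B, ι, hs⟩ := ih hP.2
      exact ⟨B, _, Step.sumR M hs⟩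
  | con h ih =>
      obtain ⟨B, ι, hs⟩ := ih (henv _)
      exact ⟨B, ι, Step.con hs⟩
  | com ℓ h1 h2 ih1 ih2 =>
      obtain ⟨B1, ι1, hs1⟩ := ih1 hP.1
      obtain ⟨B2, ι2, hs2⟩ := ih2 hP.2
      obtain ⟨n1, b1⟩ := step_clockfree_facts henv hs1 hP.1
      obtain ⟨_, b2⟩ := step_clockfree_facts henv hs2 hP.2
      have hsync : syncAct ℓ = Act.tau := by
        cases ℓ with
        | pos a => rfl
        | neg a => rfl
        | clock => exact absurd rfl n1
      exact ⟨B1 ∪ B2, predAdd ι1 ι2,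
        hsync ▸ Step.com hs1 hs2 (eschews_of_empty b2) (eschews_of_empty b1)⟩
  | parL Q h ih =>
      obtain ⟨B, ι, hs⟩ := ih hP.1
      obtain ⟨n, b⟩ := step_clockfree_facts henv hs hP.1
      exact ⟨B, _, Step.parL Q hs (fun hc => absurd hc n) (eschews_of_empty b)⟩
  | parR P h ih =>
      obtain ⟨B, ι, hs⟩ := ih hP.2
      obtain ⟨n, b⟩ := step_clockfree_facts henv hs hP.2
      exact ⟨B, _, Step.parR P hs (fun hc => absurd hc n) (eschews_of_empty b)⟩
  | restr A h hn ih =>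
      obtain ⟨B, ι, hs⟩ := ih hP
      exact ⟨_, _, Step.restr A hs hn⟩

/-- Conservative extension of Milner's CCS: on the clock-free, priority-free fragment,
the strategic transitions of CCSˡᵐ (for some blocking B and prediction ι) coincide with
Milner's CCS transitions. -/
theorem conservative_extension_of_CCS {Name PName : Type} (env : PName → Proc Name PName)
    (henv : ∀ p, ClockFree (env p))
    (P Q : Proc Name PName) (hP : ClockFree P) (hQ : ClockFree Q)
    (α : Act Name) :
    (∃ B ι, Step env P α B ι Q) ↔ CCSStep env P α Q := by
  constructor
  · rintro ⟨B, ι, h⟩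
    exact step_to_ccs henv h hP
  · intro h
    exact ccs_to_step henv h hP

end CCSlm
end

section
/- Clock determinism of observable processes: if P is an observable process (modulo a congruence ≅) of single-clock CCSˡᵐ, Q is a derivative of P, and Q —σ:B1[ι1]→ Q1 and Q —σ:B2[ι2]→ Q2 are two transitions of Q with the clock action σ, then Q1 ≅ Q2. -/
namespace CCSlm

private lemma clock_mem_wilAgo {Name PName : Type} {env : PName → Proc Name PName}
    {rec : Horizon → Proc Name PName → Set (Label Name)}
    (hrec : ∀ C P, Label.clock ∈ rec C P → HasClock env P) :
    ∀ (P : Proc Name PName) (C : Horizon),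
      Label.clock ∈ wilAgo env rec C P → HasClock env P := by
  intro P
  induction P with
  | name p => intro C h; exact HasClock.name p (hrec C (env p) h)
  | par P Q ihP ihQ =>
    intro C h
    rcases h with h | h
    · exact HasClock.parL Q (ihP C h)
    · exact HasClock.parR P (ihQ C h)
  | restr P A ih =>
    intro C h; exact HasClock.restr A (ih C h.1)
  | nil C' => intro C h; exact absurd h (Set.notMem_empty _)
  | pre α L P ih =>
    intro C h
    match α with
    | .lab .clock => exact HasClock.preClock L P
    | .lab (.pos a) =>
      rcases h with h | h
      · simp [Act.labels] at h
      · exact HasClock.preCont _ L (ih C h)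
    | .lab (.neg a) =>
      rcases h with h | h
      · simp [Act.labels] at h
      · exact HasClock.preCont _ L (ih C h)
    | .tau =>
      rcases h with h | h
      · exact absurd h (Set.notMem_empty _)
      · exact HasClock.preCont _ L (ih C h)
  | sum M N ihM ihN =>
    intro C h
    rcases h with h | h
    · exact HasClock.sumL N (ihM C h)
    · exact HasClock.sumR M (ihN C h)

private lemma clock_mem_wilA {Name PName : Type} {env : PName → Proc Name PName} :
    ∀ (n : ℕ) (C : Horizon) (P : Proc Name PName),
      Label.clock ∈ wilA env n C P → HasClock env P := by
  intro n
  induction n with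
  | zero =>
    intro C P h
    exact clock_mem_wilAgo (fun _ _ h => absurd h (Set.notMem_empty _)) P C h
  | succ n ih =>
    intro C P h
    exact clock_mem_wilAgo ih P C h

private lemma clock_notMem_iAstar {Name PName : Type} {env : PName → Proc Name PName}
    {P : Proc Name PName} (h : ¬ HasClock env P) (C : Horizon) :
    Label.clock ∉ iAstar env C P := by
  intro hmem
  rcases Set.mem_iUnion.1 hmem with ⟨n, hn⟩
  exact h (clock_mem_wilA n C P hn)

/-- A clock transition never predicts itself. -/
private lemma clock_step_no_self_pred {Name PName : Type} {env : PName → Proc Name PName}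
    {Q Q' : Proc Name PName} {α : Act Name} {B : Blocking Name} {ι : Pred Name}
    (h : Step env Q α B ι Q') (hα : α = .lab .clock) :
    Label.clock ∉ ι true := by
  induction h with
  | act α L P => exact Set.notMem_empty _
  | sumL N hs ih =>
    intro hmem
    rcases hmem with hmem | hmem
    · exact ih hα hmem
    · subst hα; exact hmem.2 rfl
  | sumR M hs ih =>
    intro hmem
    rcases hmem with hmem | hmem
    · exact ih hα hmem
    · subst hα; exact hmem.2 rfl
  | con hs ih => exact ih hα
  | com h1 h2 e1 e2 ih1 ih2 =>
    rename_i ℓ _ _ _ _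
    match ℓ, hα with
    | .clock, _ =>
      intro hmem
      rcases hmem with hmem | hmem
      · exact ih1 rfl hmem
      · exact ih2 rfl hmem
  | parL Q hs hσ e ih =>
    intro hmem
    rcases hmem with hmem | hmem
    · exact ih hα hmem
    · exact clock_notMem_iAstar (hσ hα) true hmem
  | parR P hs hσ e ih =>
    intro hmem
    rcases hmem with hmem | hmem
    · exact ih hα hmem
    · exact clock_notMem_iAstar (hσ hα) true hmem
  | restr A hs hA ih =>
    intro hmem
    exact ih hα hmem.1

/-- Clock determinism of observable processes: any two σ-transitions of a derivative of an
observable process lead to congruent states. -/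
theorem clock_determinism_of_observable {Name PName : Type} (env : PName → Proc Name PName)
    (cong : Proc Name PName → Proc Name PName → Prop)
    (hcong : IsCongruence cong)
    {P Q Q1 Q2 : Proc Name PName} {B1 B2 : Blocking Name} {ι1 ι2 : Pred Name}
    (hobs : Observable env cong P)
    (hder : Deriv env P Q)
    (h1 : Step env Q (.lab .clock) B1 ι1 Q1)
    (h2 : Step env Q (.lab .clock) B2 ι2 Q2) :
    cong Q1 Q2 := by
  by_contra h
  have := (hobs Q Q1 Q2 _ _ B1 B2 ι1 ι2 hder h1 h2 (Or.inr h) .clock .clock rfl rfl).1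
  exact clock_step_no_self_pred h2 rfl this

end CCSlm
end

section
/- Clock stability (Constructivity Assumption): for every well-formed process P of single-clock CCSˡᵐ and every derivable strategic transition P —α:B[ι]→ Q, the clock horizon is preserved, clk(Q) = clk(P), and if α = σ then clk(P) = ⊤. -/
namespace CCSlm

lemma hasClock_par_iff {Name PName : Type} (env : PName → Proc Name PName)
    (P Q : Proc Name PName) :
    HasClock env (.par P Q) ↔ HasClock env P ∨ HasClock env Q := by
  constructor
  · intro h; cases h with
    | parL _ h => exact Or.inl h
    | parR _ h => exact Or.inr h
  · rintro (h | h)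
    · exact .parL _ h
    · exact .parR _ h

lemma hasClock_restr_iff {Name PName : Type} (env : PName → Proc Name PName)
    (P : Proc Name PName) (A : Set Name) :
    HasClock env (.restr P A) ↔ HasClock env P := by
  constructor
  · intro h; cases h with | restr _ h => exact h
  · exact .restr A

lemma hasClock_name_iff {Name PName : Type} (env : PName → Proc Name PName) (p : PName) :
    HasClock env (.name p) ↔ HasClock env (env p) := by
  constructor
  · intro h; cases h with | name _ h => exact h
  · exact .name p

lemma clk_eq_of_iff {Name PName : Type} (env : PName → Proc Name PName)
    {P Q : Proc Name PName} (h : HasClock env P ↔ HasClock env Q) :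
    clk env P = clk env Q := by
  unfold clk
  split_ifs with h1 h2 h2
  · rfl
  · exact absurd (h.mp h1) h2
  · exact absurd (h.mpr h2) h1
  · rfl

lemma clk_par {Name PName : Type} (env : PName → Proc Name PName) (P Q : Proc Name PName) :
    clk env (.par P Q) = (clk env P || clk env Q) := by
  unfold clk
  split_ifs with h1 h2 h3 <;>
    simp_all [hasClock_par_iff, Classical.not_not]

lemma clk_true_iff {Name PName : Type} (env : PName → Proc Name PName) (P : Proc Name PName) :
    clk env P = true ↔ HasClock env P := by
  unfold clk; split_ifs with h <;> simp [h]

/-- Clock stability (Constructivity Assumption): for well-formed processes, strategic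
transitions preserve the clock horizon, and a σ-transition requires clk(P) = ⊤. -/
theorem clock_stability {Name PName : Type} (env : PName → Proc Name PName)
    (henv : ∀ p, WF env (env p))
    {P Q : Proc Name PName} {α : Act Name} {B : Blocking Name} {ι : Pred Name}
    (hP : WF env P)
    (h : Step env P α B ι Q) :
    clk env Q = clk env P ∧ (α = .lab .clock → clk env P = true) := by
  induction h with
  | act α L P =>
    obtain ⟨_, hiff⟩ := hP
    refine ⟨clk_eq_of_iff env hiff.symm, ?_⟩
    rintro rfl
    exact (clk_true_iff _ _).mpr (.preClock L P)
  | @sumL M _ _ _ _ N h ih =>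
    obtain ⟨hM, hN, hMN⟩ := hP
    obtain ⟨h1, h2⟩ := ih hM
    have hsum : HasClock env (.sum M N) ↔ HasClock env M := by
      constructor
      · intro h; cases h with
        | sumL _ h => exact h
        | sumR _ h => exact hMN.mpr h
      · exact .sumL N
    refine ⟨h1.trans (clk_eq_of_iff env hsum).symm, fun hα => ?_⟩
    rw [(clk_true_iff _ _).mpr (hsum.mpr ((clk_true_iff _ _).mp (h2 hα)))]
  | @sumR M N _ _ _ _ h ih =>
    obtain ⟨hM, hN, hMN⟩ := hP
    obtain ⟨h1, h2⟩ := ih hN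
    have hsum : HasClock env (.sum M N) ↔ HasClock env N := by
      constructor
      · intro h; cases h with
        | sumL _ h => exact hMN.mp h
        | sumR _ h => exact h
      · exact .sumR M
    refine ⟨h1.trans (clk_eq_of_iff env hsum).symm, fun hα => ?_⟩
    rw [(clk_true_iff _ _).mpr (hsum.mpr ((clk_true_iff _ _).mp (h2 hα)))]
  | @con p _ _ _ _ h ih =>
    obtain ⟨h1, h2⟩ := ih (henv p)
    exact ⟨h1.trans (clk_eq_of_iff env (hasClock_name_iff env p)).symm,
      fun hα => by
        rw [(clk_true_iff _ _).mpr ((hasClock_name_iff env p).mpr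
          ((clk_true_iff _ _).mp (h2 hα)))]⟩
  | @com P1 P2 P1' P2' ℓ _ _ _ _ h1 h2 _ _ ih1 ih2 =>
    obtain ⟨hP1, hP2⟩ := hP
    obtain ⟨e1, c1⟩ := ih1 hP1
    obtain ⟨e2, c2⟩ := ih2 hP2
    rw [clk_par, clk_par, e1, e2]
    refine ⟨rfl, fun hα => ?_⟩
    have : ℓ = .clock := by
      cases ℓ <;> simp_all [syncAct]
    subst this
    rw [c1 rfl]; simp
  | @parL P _ _ _ P' Q h hq _ ih =>
    obtain ⟨hPw, hQw⟩ := hP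
    obtain ⟨e, c⟩ := ih hPw
    rw [clk_par, clk_par, e]
    refine ⟨rfl, fun hα => ?_⟩
    rw [c hα]; simp
  | @parR P Q _ _ _ Q' h hq _ ih =>
    obtain ⟨hPw, hQw⟩ := hP
    obtain ⟨e, c⟩ := ih hQw
    rw [clk_par, clk_par, e]
    refine ⟨rfl, fun hα => ?_⟩
    rw [c hα]; simp
  | @restr P _ _ _ Q A h _ ih =>
    obtain ⟨e, c⟩ := ih hP
    refine ⟨?_, fun hα => ?_⟩
    · rw [clk_eq_of_iff env (hasClock_restr_iff env Q A),
        clk_eq_of_iff env (hasClock_restr_iff env P A), e]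
    · rw [(clk_true_iff _ _).mpr ((hasClock_restr_iff env P A).mpr
        ((clk_true_iff _ _).mp (c hα)))]

end CCSlm
end
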